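/- Let S be a free numerical semigroup generated by a telescopic sequence T = (t_0, …, t_k) with gcd(T) = 1, and suppose exactly one term t_m of T is odd (all other terms t_i with i ≠ m are even). Then O(G(S)) − E(G(S)) = (t_m − 1)/2. -/

import Mathlib

/-- The monoid `⟨t_0, …, t_{n-1}⟩` of all nonnegative integer linear combinations of
the first `n` terms of the sequence `t`. -/
def genBy (t : ℕ → ℕ) (n : ℕ) : Set ℕ :=
  {s | ∃ x : ℕ → ℕ, s = ∑ i ∈ Finset.range n, x i * t i}

/-- `d_i = gcd(t_0, …, t_i)`. -/
def seqD (t : ℕ → ℕ) (i : ℕ) : ℕ := Finset.gcd (Finset.range (i + 1)) t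

/-- `c_j = d_{j-1} / d_j` (for `j ≥ 1`). -/
def seqC (t : ℕ → ℕ) (j : ℕ) : ℕ := seqD t (j - 1) / seqD t j

/-- The sequence `(t_0, …, t_k)` of positive integers is telescopic if
`c_j · t_j ∈ ⟨t_0, …, t_{j-1}⟩` for every `j = 1, …, k`. -/
def IsTelescopic (t : ℕ → ℕ) (k : ℕ) : Prop :=
  (∀ i ≤ k, 0 < t i) ∧ ∀ j, 1 ≤ j → j ≤ k → seqC t j * t j ∈ genBy t j

/-- `O(T)`: the number of odd elements of `T`. -/
noncomputable def countOdd (T : Set ℕ) : ℕ := {x ∈ T | Odd x}.ncard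

/-- `E(T)`: the number of even elements of `T`. -/
noncomputable def countEven (T : Set ℕ) : ℕ := {x ∈ T | Even x}.ncard

open Finset

lemma zero_mem_genBy (t : ℕ → ℕ) (n : ℕ) : 0 ∈ genBy t n :=
  ⟨fun _ => 0, by simp⟩

lemma add_mem_genBy {t : ℕ → ℕ} {n a b : ℕ} (ha : a ∈ genBy t n) (hb : b ∈ genBy t n) :
    a + b ∈ genBy t n := by
  obtain ⟨x, rfl⟩ := ha; obtain ⟨y, rfl⟩ := hb
  exact ⟨fun i => x i + y i, by rw [← Finset.sum_add_distrib]; simp [add_mul]⟩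

lemma nsmul_mem_genBy {t : ℕ → ℕ} {n a : ℕ} (c : ℕ) (ha : a ∈ genBy t n) :
    c * a ∈ genBy t n := by
  obtain ⟨x, rfl⟩ := ha
  exact ⟨fun i => c * x i, by rw [Finset.mul_sum]; simp [mul_assoc]⟩

lemma t_mem_genBy {t : ℕ → ℕ} {n i : ℕ} (hi : i < n) : t i ∈ genBy t n := by
  refine ⟨fun j => if j = i then 1 else 0, ?_⟩
  rw [Finset.sum_eq_single i]
  · simp
  · intro b _ hb; simp [hb]
  · intro h; exact absurd (Finset.mem_range.2 hi) h

lemma genBy_mono {t : ℕ → ℕ} {n m : ℕ} (h : n ≤ m) : genBy t n ⊆ genBy t m := by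
  rintro s ⟨x, rfl⟩
  refine ⟨fun i => if i < n then x i else 0, ?_⟩
  rw [← Finset.sum_subset (Finset.range_subset_range.2 h) (fun i _ hi => by
    have : ¬ i < n := fun hc => hi (Finset.mem_range.2 hc)
    simp [this])]
  exact Finset.sum_congr rfl fun i hi => by simp [Finset.mem_range.1 hi]

lemma seqD_dvd {t : ℕ → ℕ} {k i : ℕ} (h : i ≤ k) : seqD t k ∣ t i :=
  Finset.gcd_dvd (Finset.mem_range.2 (Nat.lt_succ_of_le h))

lemma seqD_succ (t : ℕ → ℕ) (k : ℕ) : seqD t (k + 1) = Nat.gcd (t (k + 1)) (seqD t k) := by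
  unfold seqD
  rw [Finset.range_add_one, Finset.gcd_insert]
  rfl

lemma seqD_zero (t : ℕ → ℕ) : seqD t 0 = t 0 := by
  unfold seqD
  simp [Finset.range_one]

lemma seqD_pos {t : ℕ → ℕ} (h : 0 < t 0) (k : ℕ) : 0 < seqD t k := by
  rcases Nat.eq_zero_or_pos (seqD t k) with h0 | h0
  · exfalso
    have := (Finset.gcd_eq_zero_iff.1 h0) 0 (Finset.mem_range.2 (Nat.succ_pos k))
    omega
  · exact h0

lemma dvd_of_mem_genBy {t : ℕ → ℕ} {k s : ℕ} (hs : s ∈ genBy t (k + 1)) : seqD t k ∣ s := by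
  obtain ⟨x, rfl⟩ := hs
  exact Finset.dvd_sum fun i hi => Dvd.dvd.mul_left (seqD_dvd (Nat.lt_succ_iff.1 (Finset.mem_range.1 hi))) _

-- scaling
example (t t' : ℕ → ℕ) (d n s : ℕ) (hd : ∀ i < n, t i = d * t' i) :
    s ∈ {s | ∃ x : ℕ → ℕ, s = ∑ i ∈ Finset.range n, x i * t i} ↔
      ∃ s' ∈ {s | ∃ x : ℕ → ℕ, s = ∑ i ∈ Finset.range n, x i * t' i}, s = d * s' := by
  constructor
  · rintro ⟨x, rfl⟩
    refine ⟨∑ i ∈ range n, x i * t' i, ⟨x, rfl⟩, ?_⟩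
    rw [Finset.mul_sum]
    exact Finset.sum_congr rfl fun i hi => by rw [hd i (mem_range.1 hi)]; ring
  · rintro ⟨s', ⟨x, rfl⟩, rfl⟩
    refine ⟨x, ?_⟩
    rw [Finset.mul_sum]
    exact Finset.sum_congr rfl fun i hi => by rw [hd i (mem_range.1 hi)]; ring

-- gcd scale
example (t t' : ℕ → ℕ) (d i : ℕ) (hd : ∀ j ≤ i, t j = d * t' j) :
    Finset.gcd (Finset.range (i+1)) t = d * Finset.gcd (Finset.range (i+1)) t' := by
  rw [show Finset.gcd (Finset.range (i+1)) t = Finset.gcd (Finset.range (i+1)) (fun j => d * t' j) from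
    Finset.gcd_congr rfl fun j hj => hd j (Nat.lt_succ_iff.1 (mem_range.1 hj))]
  rw [Finset.gcd_mul_left]
  simp

def eps (n : ℕ) : ℤ := if n % 2 = 0 then -1 else 1

lemma eps_congr {a b : ℕ} (h : a % 2 = b % 2) : eps a = eps b := by unfold eps; rw [h]

lemma sum_mod_two (n : ℕ) : ∑ r ∈ range n, r % 2 = n / 2 := by
  induction n with
  | zero => simp
  | succ n ih => rw [Finset.sum_range_succ, ih]; omega

lemma eps_two_mul (e : ℕ) : eps (2*e) = -1 := by
  have h : (2*e) % 2 = 0 := by omega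
  simp [eps, h]

lemma eps_two_mul_add_one (e : ℕ) : eps (2*e+1) = 1 := by
  have h : (2*e+1) % 2 = 1 := by omega
  simp [eps, h]

lemma sum_eps_even (e : ℕ) : ∑ x ∈ range (2*e), eps x = 0 := by
  induction e with
  | zero => simp
  | succ e ih =>
    have h : 2 * (e+1) = (2*e) + 1 + 1 := by ring
    rw [h, Finset.sum_range_succ, Finset.sum_range_succ, ih, eps_two_mul, eps_two_mul_add_one]
    ring

lemma sum_eps_mul_even (e : ℕ) : ∑ x ∈ range (2*e), eps x * x = (e : ℤ) := by
  induction e with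
  | zero => simp
  | succ e ih =>
    have h : 2 * (e+1) = (2*e) + 1 + 1 := by ring
    rw [h, Finset.sum_range_succ, Finset.sum_range_succ, ih, eps_two_mul, eps_two_mul_add_one]
    push_cast
    ring

lemma exists_modinv {τ d : ℕ} (hcop : Nat.Coprime τ d) (hd : 0 < d) :
    ∃ τ' < d, (τ * τ') % d = 1 % d := by
  haveI : NeZero d := ⟨hd.ne'⟩
  refine ⟨((τ : ZMod d)⁻¹).val, ZMod.val_lt _, ?_⟩
  have h1 : ((τ * ((τ : ZMod d)⁻¹).val : ℕ) : ZMod d) = ((1 : ℕ) : ZMod d) := by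
    push_cast
    rw [ZMod.natCast_val, ZMod.cast_id]
    exact ZMod.coe_mul_inv_eq_one τ hcop
  have := (ZMod.natCast_eq_natCast_iff _ _ _).1 h1
  exact this

-- bijection sum
lemma sum_mul_mod (g : ℕ → ℤ) {τ d : ℕ} (hcop : Nat.Coprime τ d) (hd : 0 < d) :
    ∑ x ∈ range d, g ((x * τ) % d) = ∑ r ∈ range d, g r := by
  obtain ⟨τ', hτ'd, hττ'⟩ := exists_modinv hcop hd
  apply Finset.sum_nbij' (fun x => (x * τ) % d) (fun y => (y * τ') % d)
  · intro x hx; exact mem_range.2 (Nat.mod_lt _ hd)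
  · intro y hy; exact mem_range.2 (Nat.mod_lt _ hd)
  · intro x hx
    have : ((x * τ) % d * τ') % d = x % d := by
      rw [Nat.mod_mul_mod, mul_assoc, Nat.mul_mod, hττ', ← Nat.mul_mod, mul_one]
    rw [this, Nat.mod_eq_of_lt (mem_range.1 hx)]
  · intro y hy
    have : ((y * τ') % d * τ) % d = y % d := by
      rw [Nat.mod_mul_mod, mul_assoc, mul_comm τ' τ, Nat.mul_mod, hττ', ← Nat.mul_mod, mul_one]
    rw [this, Nat.mod_eq_of_lt (mem_range.1 hy)]
  · intro x hx; rfl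

lemma genBy_scale {t t' : ℕ → ℕ} {d n : ℕ} (hd : ∀ i < n, t i = d * t' i) (s : ℕ) :
    s ∈ genBy t n ↔ ∃ s' ∈ genBy t' n, s = d * s' := by
  constructor
  · rintro ⟨x, rfl⟩
    refine ⟨∑ i ∈ range n, x i * t' i, ⟨x, rfl⟩, ?_⟩
    rw [Finset.mul_sum]
    exact Finset.sum_congr rfl fun i hi => by rw [hd i (mem_range.1 hi)]; ring
  · rintro ⟨s', ⟨x, rfl⟩, rfl⟩
    refine ⟨x, ?_⟩
    rw [Finset.mul_sum]
    exact Finset.sum_congr rfl fun i hi => by rw [hd i (mem_range.1 hi)]; ring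

lemma seqD_scale {t t' : ℕ → ℕ} {d i : ℕ} (hd : ∀ j ≤ i, t j = d * t' j) :
    seqD t i = d * seqD t' i := by
  unfold seqD
  rw [show Finset.gcd (Finset.range (i+1)) t = Finset.gcd (Finset.range (i+1)) (fun j => d * t' j) from
    Finset.gcd_congr rfl fun j hj => hd j (Nat.lt_succ_iff.1 (mem_range.1 hj))]
  rw [Finset.gcd_mul_left]
  simp

lemma exists_class {τ d : ℕ} (hcop : Nat.Coprime τ d) (hd : 0 < d) (n : ℕ) :
    ∃ x < d, (x * τ) % d = n % d := by
  obtain ⟨τ', hτ'd, hττ'⟩ := exists_modinv hcop hd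
  refine ⟨(n * τ') % d, Nat.mod_lt _ hd, ?_⟩
  rw [Nat.mod_mul_mod, mul_assoc, mul_comm τ' τ, Nat.mul_mod n (τ * τ'), hττ',
    ← Nat.mul_mod, mul_one]

section Step

variable {t : ℕ → ℕ} {k : ℕ}

lemma reduce {c n s : ℕ} (hc : c * t n ∈ genBy t n) (hcpos : 0 < c)
    (hs : s ∈ genBy t (n+1)) : ∃ y ∈ genBy t n, ∃ x < c, s = y + x * t n := by
  obtain ⟨x, rfl⟩ := hs
  rw [Finset.sum_range_succ]
  refine ⟨(∑ i ∈ range n, x i * t i) + (x n / c) * (c * t n),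
    add_mem_genBy ⟨x, rfl⟩ (nsmul_mem_genBy _ hc), x n % c, Nat.mod_lt _ hcpos, ?_⟩
  have h := Nat.div_add_mod (x n) c
  calc (∑ i ∈ range n, x i * t i) + x n * t n
      = (∑ i ∈ range n, x i * t i) + (c * (x n / c) + x n % c) * t n := by rw [h]
    _ = (∑ i ∈ range n, x i * t i) + (x n / c) * (c * t n) + (x n % c) * t n := by ring

variable (htel : IsTelescopic t (k+1)) (hgcd : seqD t (k+1) = 1)

include htel

lemma ht0 : 0 < t 0 := htel.1 0 (by omega)

lemma hd0 : 0 < seqD t k := seqD_pos (ht0 htel) k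

lemma step_t_eq : ∀ i ≤ k, t i = seqD t k * (t i / seqD t k) :=
  fun i hi => (Nat.mul_div_cancel' (seqD_dvd hi)).symm

include hgcd

lemma step_cop : Nat.Coprime (t (k+1)) (seqD t k) := by
  have h := seqD_succ t k
  rw [hgcd] at h
  exact h.symm

lemma step_gcd : seqD (fun i => t i / seqD t k) k = 1 := by
  have h : seqD t k = seqD t k * seqD (fun i => t i / seqD t k) k :=
    seqD_scale (step_t_eq htel)
  have := hd0 htel
  nlinarith [Nat.le_of_eq h]

lemma step_telescopic : IsTelescopic (fun i => t i / seqD t k) k := by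
  set d := seqD t k with hdd
  have hpos := hd0 htel
  constructor
  · intro i hi
    have h1 := htel.1 i (by omega)
    have h2 := step_t_eq htel i hi
    by_contra h
    simp only [not_lt, Nat.le_zero] at h
    rw [h, mul_zero] at h2
    omega
  · intro j hj1 hjk
    have hC : seqC (fun i => t i / d) j = seqC t j := by
      unfold seqC
      have e1 : seqD t (j-1) = d * seqD (fun i => t i / d) (j-1) :=
        seqD_scale (fun i hi => step_t_eq htel i (by omega))
      have e2 : seqD t j = d * seqD (fun i => t i / d) j :=
        seqD_scale (fun i hi => step_t_eq htel i (by omega))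
      rw [e1, e2, Nat.mul_div_mul_left _ _ hpos]
    have hmem := htel.2 j hj1 (by omega)
    have hscale := genBy_scale (t' := fun i => t i / d) (d := d) (n := j)
      (fun i hi => step_t_eq htel i (by omega)) (seqC t j * t j)
    obtain ⟨s', hs', heq⟩ := hscale.1 hmem
    have htj : t j = d * (t j / d) := step_t_eq htel j (by omega)
    have h2 : seqC t j * t j = d * (seqC t j * (t j / d)) := by
      conv_lhs => rw [htj]
      ring
    rw [h2] at heq
    have h3 : seqC t j * (t j / d) = s' := Nat.eq_of_mul_eq_mul_left hpos heq
    rw [hC, h3]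
    exact hs'

lemma step_char (n : ℕ) :
    n ∈ genBy t (k+2) ↔
      ∃ x < seqD t k, ∃ q ∈ genBy (fun i => t i / seqD t k) (k+1),
        n = seqD t k * q + x * t (k+1) := by
  set d := seqD t k with hdd
  have hpos := hd0 htel
  have hc : seqC t (k+1) = d := by
    unfold seqC
    simp [hgcd, hdd]
  constructor
  · intro hn
    have hcc := htel.2 (k+1) (by omega) le_rfl
    rw [hc] at hcc
    obtain ⟨y, hy, x, hx, rfl⟩ := reduce hcc hpos hn
    obtain ⟨q, hq, rfl⟩ := (genBy_scale (t' := fun i => t i / d) (d := d) (n := k+1)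
      (fun i hi => step_t_eq htel i (by omega)) y).1 hy
    exact ⟨x, hx, q, hq, rfl⟩
  · rintro ⟨x, hx, q, hq, rfl⟩
    apply add_mem_genBy
    · apply genBy_mono (by omega : k+1 ≤ k+2)
      exact (genBy_scale (t' := fun i => t i / d) (d := d) (n := k+1)
        (fun i hi => step_t_eq htel i (by omega)) _).2 ⟨q, hq, rfl⟩
    · exact nsmul_mem_genBy x (t_mem_genBy (by omega))

lemma step_mem_iff {n x : ℕ} (hx : x < seqD t k)
    (hmod : (x * t (k+1)) % seqD t k = n % seqD t k) :
    n ∈ genBy t (k+2) ↔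
      ∃ q ∈ genBy (fun i => t i / seqD t k) (k+1), n = seqD t k * q + x * t (k+1) := by
  set d := seqD t k with hdd
  set τ := t (k+1) with hττ
  constructor
  · intro hn
    obtain ⟨x₁, hx₁, q, hq, rfl⟩ := (step_char htel hgcd _).1 hn
    have hmod₁ : (d * q + x₁ * τ) % d = (x₁ * τ) % d := by
      rw [add_comm, Nat.add_mul_mod_self_left]
    have : (x * τ) % d = (x₁ * τ) % d := by rw [hmod, hmod₁]
    have hxx : x = x₁ := by
      have hcan := Nat.ModEq.cancel_right_of_coprime
        (Nat.Coprime.symm (step_cop htel hgcd)) this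
      have := hcan
      unfold Nat.ModEq at this
      rw [Nat.mod_eq_of_lt hx, Nat.mod_eq_of_lt hx₁] at this
      exact this
    rw [hxx]
    exact ⟨q, hq, rfl⟩
  · rintro ⟨q, hq, rfl⟩
    exact (step_char htel hgcd _).2 ⟨x, hx, q, hq, rfl⟩

end Step

lemma genBy_one_of_gcd_one {t : ℕ → ℕ} (h : t 0 = 1) (n : ℕ) : n ∈ genBy t 1 := by
  exact ⟨fun _ => n, by simp [Finset.range_one, h]⟩

lemma genBy_bound : ∀ (k : ℕ) (t : ℕ → ℕ), IsTelescopic t k → seqD t k = 1 →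
    ∃ B, ∀ n, B ≤ n → n ∈ genBy t (k+1) := by
  intro k
  induction k with
  | zero =>
    intro t htel hgcd
    have h0 : t 0 = 1 := by rw [← seqD_zero t]; exact hgcd
    exact ⟨0, fun n _ => genBy_one_of_gcd_one h0 n⟩
  | succ k ih =>
    intro t htel hgcd
    set d := seqD t k with hdd
    set τ := t (k+1) with hττ
    have hpos : 0 < d := hd0 htel
    obtain ⟨B', hB'⟩ := ih (fun i => t i / d) (step_telescopic htel hgcd) (step_gcd htel hgcd)
    refine ⟨d * B' + d * τ, fun n hn => ?_⟩
    obtain ⟨x, hx, hmod⟩ := exists_class (step_cop htel hgcd) hpos n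
    have hxτ : x * τ ≤ n := by
      have : x * τ ≤ d * τ := Nat.mul_le_mul_right _ (le_of_lt hx)
      omega
    have hdvd : d ∣ n - x * τ := (Nat.modEq_iff_dvd' hxτ).1 hmod
    obtain ⟨q, hq⟩ := hdvd
    have hqB : B' ≤ q := by
      have h1 : d * B' ≤ n - x * τ := by
        have : x * τ ≤ d * τ := Nat.mul_le_mul_right _ (le_of_lt hx)
        omega
      rw [hq] at h1
      exact Nat.le_of_mul_le_mul_left h1 hpos
    have hneq : n = d * q + x * τ := by omega
    exact (step_mem_iff htel hgcd hx hmod).2 ⟨q, hB' q hqB, hneq⟩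

open scoped Classical in
noncomputable def gapF (S : Set ℕ) (B : ℕ) : Finset ℕ :=
  (Finset.range B).filter (fun n => n ∉ S)

lemma mem_gapF {S : Set ℕ} {B n : ℕ} : n ∈ gapF S B ↔ n < B ∧ n ∉ S := by
  simp [gapF]

lemma sum_eps_Icc (M : ℕ) : ∑ a ∈ Finset.Icc 1 M, eps a = ((M % 2 : ℕ) : ℤ) := by
  induction M with
  | zero => simp
  | succ M ih =>
    rw [Finset.sum_Icc_succ_top (by omega), ih]
    unfold eps
    split_ifs <;> omega

lemma main_sum : ∀ (k : ℕ) (t : ℕ → ℕ) (m : ℕ), IsTelescopic t k → seqD t k = 1 →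
    m ≤ k → Odd (t m) → (∀ i ≤ k, i ≠ m → Even (t i)) →
    ∀ B, (∀ n, n ∉ genBy t (k+1) → n < B) →
    2 * ∑ n ∈ gapF (genBy t (k+1)) B, eps n = (t m : ℤ) - 1 := by
  intro k
  induction k with
  | zero =>
    intro t m htel hgcd hmk hmodd heven B hB
    have h0 : t 0 = 1 := by rw [← seqD_zero t]; exact hgcd
    have hm0 : m = 0 := by omega
    have hempty : ∑ n ∈ gapF (genBy t 1) B, eps n = 0 := by
      apply Finset.sum_eq_zero
      intro n hn
      exact absurd (genBy_one_of_gcd_one h0 n) (mem_gapF.1 hn).2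
    rw [hempty, hm0, h0]
    norm_num
  | succ k ih =>
    intro t m htel hgcd hmk hmodd heven B hB
    set d := seqD t k with hdd
    set τ := t (k+1) with hττ
    set t' : ℕ → ℕ := fun i => t i / d with ht'
    set S' := genBy t' (k+1) with hS'
    set P := genBy t (k+2) with hP
    have hpos : 0 < d := hd0 htel
    have hcop : Nat.Coprime τ d := step_cop htel hgcd
    have htel' : IsTelescopic t' k := step_telescopic htel hgcd
    have hgcd' : seqD t' k = 1 := step_gcd htel hgcd
    have ht_eq : ∀ i ≤ k, t i = d * t' i :=
      fun i hi => (Nat.mul_div_cancel' (seqD_dvd hi)).symm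
    obtain ⟨B', hB'mem⟩ := genBy_bound k t' htel' hgcd'
    have hGap' : ∀ q, q ∉ S' → q < B' := by
      intro q hq
      by_contra h
      exact hq (hB'mem q (by omega))
    -- the pieces
    set A : ℕ → Finset ℕ := fun x => (Finset.Icc 1 (x*τ/d)).image (fun a => x*τ - d*a) with hA
    set C : ℕ → Finset ℕ := fun x => (gapF S' B').image (fun q => x*τ + d*q) with hC
    -- membership facts
    have hAres : ∀ x n, n ∈ A x → n % d = (x*τ) % d ∧ n < x*τ := by
      intro x n hn
      obtain ⟨a, ha, rfl⟩ := Finset.mem_image.1 hn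
      rw [Finset.mem_Icc] at ha
      have hda : d*a ≤ x*τ := by
        rw [mul_comm]
        exact (Nat.le_div_iff_mul_le hpos).1 ha.2
      have hsub : (x*τ - d*a) + d*a = x*τ := Nat.sub_add_cancel hda
      constructor
      · conv_rhs => rw [← hsub]
        rw [Nat.add_mul_mod_self_left]
      · have : 0 < d*a := Nat.mul_pos hpos (by omega)
        omega
    have hCres : ∀ x n, n ∈ C x → n % d = (x*τ) % d ∧ x*τ ≤ n := by
      intro x n hn
      obtain ⟨q, hq, rfl⟩ := Finset.mem_image.1 hn
      constructor
      · rw [Nat.add_mul_mod_self_left]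
      · omega
    have hres_inj : ∀ x < d, ∀ y, y < d → (x*τ) % d = (y*τ) % d → x = y := by
      intro x hx y hy h
      have hcan := Nat.ModEq.cancel_right_of_coprime (Nat.Coprime.symm hcop) (h : x*τ ≡ y*τ [MOD d])
      unfold Nat.ModEq at hcan
      rw [Nat.mod_eq_of_lt hx, Nat.mod_eq_of_lt hy] at hcan
      exact hcan
    have hnotP_A : ∀ x, x < d → ∀ n ∈ A x, n ∉ P := by
      intro x hx n hn hnP
      obtain ⟨hmod, hlt⟩ := hAres x n hn
      obtain ⟨q, hq, heq⟩ := (step_mem_iff htel hgcd hx hmod.symm).1 hnP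
      rw [← hdd, ← hττ] at heq
      omega
    have hnotP_C : ∀ x, x < d → ∀ n ∈ C x, n ∉ P := by
      intro x hx n hn hnP
      obtain ⟨q, hqmem, rfl⟩ := Finset.mem_image.1 hn
      obtain ⟨hqB, hqS⟩ := mem_gapF.1 hqmem
      obtain ⟨hmod, hge⟩ := hCres x _ hn
      obtain ⟨q₁, hq₁, heq⟩ := (step_mem_iff htel hgcd hx hmod.symm).1 hnP
      rw [← hdd, ← hττ] at heq
      have : d * q₁ = d * q := by omega
      have : q₁ = q := Nat.eq_of_mul_eq_mul_left hpos this
      exact hqS (this ▸ hq₁)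
    -- gap decomposition
    have hgap_eq : gapF P B = (range d).biUnion (fun x => A x ∪ C x) := by
      ext n
      rw [mem_gapF, Finset.mem_biUnion]
      constructor
      · rintro ⟨hnB, hnP⟩
        obtain ⟨x, hx, hmod⟩ := exists_class hcop hpos n
        refine ⟨x, mem_range.2 hx, ?_⟩
        rw [Finset.mem_union]
        by_cases hlt : n < x*τ
        · left
          have hdvd : d ∣ x*τ - n := (Nat.modEq_iff_dvd' (by omega)).1 hmod.symm
          obtain ⟨a, ha⟩ := hdvd
          refine Finset.mem_image.2 ⟨a, Finset.mem_Icc.2 ⟨?_, ?_⟩, by omega⟩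
          · rcases Nat.eq_zero_or_pos a with h0 | h0
            · subst h0
              simp at ha
              omega
            · omega
          · rw [Nat.le_div_iff_mul_le hpos, mul_comm]
            omega
        · right
          have hxτ : x*τ ≤ n := by omega
          have hdvd : d ∣ n - x*τ := (Nat.modEq_iff_dvd' hxτ).1 hmod
          obtain ⟨q, hq⟩ := hdvd
          have hqS : q ∉ S' := by
            intro hqmem
            exact hnP ((step_mem_iff htel hgcd hx hmod).2 ⟨q, hqmem, by rw [← hdd, ← hττ]; omega⟩)
          exact Finset.mem_image.2 ⟨q, mem_gapF.2 ⟨hGap' q hqS, hqS⟩, by omega⟩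
      · rintro ⟨x, hx, hn⟩
        rw [mem_range] at hx
        rw [Finset.mem_union] at hn
        have hnP : n ∉ P := by
          rcases hn with h | h
          · exact hnotP_A x hx n h
          · exact hnotP_C x hx n h
        exact ⟨hB n hnP, hnP⟩
    -- disjointness
    have hACdisj : ∀ x, x < d → Disjoint (A x) (C x) := by
      intro x hx
      rw [Finset.disjoint_left]
      intro n hnA hnC
      have h1 := (hAres x n hnA).2
      have h2 := (hCres x n hnC).2
      omega
    have hpair : (↑(range d) : Set ℕ).PairwiseDisjoint (fun x => A x ∪ C x) := by
      intro x hx y hy hxy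
      simp only [Finset.coe_range, Set.mem_Iio] at hx hy
      rw [Function.onFun, Finset.disjoint_left]
      intro n hnx hny
      have h1 : n % d = (x*τ) % d := by
        rcases Finset.mem_union.1 hnx with h | h
        · exact (hAres x n h).1
        · exact (hCres x n h).1
      have h2 : n % d = (y*τ) % d := by
        rcases Finset.mem_union.1 hny with h | h
        · exact (hAres y n h).1
        · exact (hCres y n h).1
      exact hxy (hres_inj x hx y hy (by omega))
    -- sum decomposition
    have hsum : ∑ n ∈ gapF P B, eps n
        = ∑ x ∈ range d, (∑ n ∈ A x, eps n + ∑ n ∈ C x, eps n) := by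
      rw [hgap_eq, Finset.sum_biUnion hpair]
      exact Finset.sum_congr rfl fun x hx =>
        Finset.sum_union (hACdisj x (mem_range.1 hx))
    have hsumA : ∀ x, ∑ n ∈ A x, eps n = ∑ a ∈ Finset.Icc 1 (x*τ/d), eps (x*τ - d*a) := by
      intro x
      apply Finset.sum_image
      intro a ha b hb hab
      rw [Finset.mem_coe, Finset.mem_Icc] at ha hb
      have hda : d*a ≤ x*τ := by
        rw [mul_comm]
        exact (Nat.le_div_iff_mul_le hpos).1 ha.2
      have hdb : d*b ≤ x*τ := by
        rw [mul_comm]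
        exact (Nat.le_div_iff_mul_le hpos).1 hb.2
      have : d*a = d*b := by simp only at hab; omega
      exact Nat.eq_of_mul_eq_mul_left hpos this
    have hsumC : ∀ x, ∑ n ∈ C x, eps n = ∑ q ∈ gapF S' B', eps (x*τ + d*q) := by
      intro x
      apply Finset.sum_image
      intro a _ b _ hab
      have : d*a = d*b := by simp only at hab; omega
      exact Nat.eq_of_mul_eq_mul_left hpos this
    rw [hsum]
    by_cases hm : m = k + 1
    · -- Case A : τ odd, d even
      have hτ2 : τ % 2 = 1 := by
        rw [hττ, ← hm]
        exact Nat.odd_iff.1 hmodd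
      have hdvd2 : 2 ∣ d := by
        apply Finset.dvd_gcd
        intro i hi
        have hik : i ≤ k := Nat.lt_succ_iff.1 (mem_range.1 hi)
        exact (heven i (by omega) (by omega)).two_dvd
      obtain ⟨e, he⟩ := hdvd2
      have hd2 : d % 2 = 0 := by omega
      have hse : ∑ x ∈ range d, eps x * (x : ℤ) = (e : ℤ) := by
        rw [he]; exact sum_eps_mul_even e
      have hse0 : ∑ x ∈ range d, eps x = 0 := by
        rw [he]; exact sum_eps_even e
      have hx_par : ∀ x, (x*τ) % 2 = x % 2 := by
        intro x
        have h1 := Nat.mul_mod x τ 2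
        rw [hτ2] at h1
        omega
      have hAx : ∀ x, ∑ n ∈ A x, eps n = eps x * ((x*τ/d : ℕ) : ℤ) := by
        intro x
        rw [hsumA x]
        have hcg : ∀ a ∈ Finset.Icc 1 (x*τ/d), eps (x*τ - d*a) = eps x := by
          intro a ha
          rw [Finset.mem_Icc] at ha
          have hda : d*a ≤ x*τ := by
            rw [mul_comm]
            exact (Nat.le_div_iff_mul_le hpos).1 ha.2
          apply eps_congr
          have h1 := hx_par x
          have h2 : (d*a) % 2 = 0 := by
            have := Nat.mul_mod d a 2
            rw [hd2] at this
            omega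
          have h3 := Nat.sub_add_cancel hda
          have h4 := Nat.add_mod (x*τ - d*a) (d*a) 2
          omega
        rw [Finset.sum_congr rfl hcg, Finset.sum_const, Nat.card_Icc]
        simp [nsmul_eq_mul, mul_comm]
      have hCx : ∀ x, ∑ n ∈ C x, eps n = eps x * ((gapF S' B').card : ℤ) := by
        intro x
        rw [hsumC x]
        have hcg : ∀ q ∈ gapF S' B', eps (x*τ + d*q) = eps x := by
          intro q hq
          apply eps_congr
          have h1 := hx_par x
          have h2 : (d*q) % 2 = 0 := by
            have := Nat.mul_mod d q 2
            rw [hd2] at this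
            omega
          have h4 := Nat.add_mod (x*τ) (d*q) 2
          omega
        rw [Finset.sum_congr rfl hcg, Finset.sum_const]
        simp [nsmul_eq_mul, mul_comm]
      have hx_eval : ∀ x ∈ range d,
          ∑ n ∈ A x, eps n + ∑ n ∈ C x, eps n
            = eps x * ((x*τ/d : ℕ) : ℤ) + eps x * ((gapF S' B').card : ℤ) := by
        intro x _
        rw [hAx x, hCx x]
      rw [Finset.sum_congr rfl hx_eval, Finset.sum_add_distrib]
      have hzero : ∑ x ∈ range d, eps x * ((gapF S' B').card : ℤ)
          = 0 := by
        rw [← Finset.sum_mul, hse0, zero_mul]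
      rw [hzero, add_zero]
      -- now need : 2 * ∑ x ∈ range d, eps x * ↑(x*τ/d) = ↑(t m) - 1
      set T := ∑ x ∈ range d, eps x * ((x*τ/d : ℕ) : ℤ) with hT
      have hdT : (d:ℤ) * T = (e:ℤ) * ((τ:ℤ) - 1) := by
        have hterm : ∀ x ∈ range d,
            (d:ℤ) * (eps x * ((x*τ/d : ℕ) : ℤ))
              = (τ:ℤ) * (eps x * (x:ℤ)) - eps ((x*τ) % d) * (((x*τ) % d : ℕ) : ℤ) := by
          intro x _
          have hdm := Nat.div_add_mod (x*τ) d
          have h1 : d * (x*τ/d) = x*τ - (x*τ)%d := by omega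
          have h2 : (x*τ)%d ≤ x*τ := Nat.mod_le _ _
          have h3 : ((d:ℤ) * ((x*τ/d : ℕ) : ℤ)) = ((x*τ : ℕ) : ℤ) - (((x*τ)%d : ℕ) : ℤ) := by
            rw [← Nat.cast_mul, h1, Nat.cast_sub h2]
          have h4 : eps x = eps ((x*τ) % d) := by
            apply eps_congr
            have p1 := hx_par x
            have p2 : (d*(x*τ/d)) % 2 = 0 := by
              have := Nat.mul_mod d (x*τ/d) 2
              rw [hd2] at this
              omega
            have p3 := Nat.add_mod (d*(x*τ/d)) ((x*τ)%d) 2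
            omega
          calc (d:ℤ) * (eps x * ((x*τ/d : ℕ) : ℤ))
              = eps x * ((d:ℤ) * ((x*τ/d : ℕ) : ℤ)) := by ring
            _ = eps x * (((x*τ : ℕ) : ℤ) - (((x*τ)%d : ℕ) : ℤ)) := by rw [h3]
            _ = eps x * ((x*τ : ℕ) : ℤ) - eps x * (((x*τ)%d : ℕ) : ℤ) := by ring
            _ = (τ:ℤ) * (eps x * (x:ℤ)) - eps ((x*τ) % d) * (((x*τ) % d : ℕ) : ℤ) := by
                rw [h4]; push_cast; ring
        rw [hT, Finset.mul_sum, Finset.sum_congr rfl hterm, Finset.sum_sub_distrib]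
        rw [← Finset.mul_sum, hse]
        have hmm := sum_mul_mod (fun r => eps r * (r : ℤ)) hcop hpos
        rw [hmm, hse]
        ring
      have hdne : (d:ℤ) ≠ 0 := by
        exact_mod_cast hpos.ne'
      have h2T : 2 * T = (τ:ℤ) - 1 := by
        apply mul_left_cancel₀ hdne
        calc (d:ℤ) * (2 * T) = 2 * ((d:ℤ) * T) := by ring
          _ = 2 * ((e:ℤ) * ((τ:ℤ) - 1)) := by rw [hdT]
          _ = (d:ℤ) * ((τ:ℤ) - 1) := by
              have : (d:ℤ) = 2 * (e:ℤ) := by exact_mod_cast he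
              rw [this]; ring
      rw [h2T, hm, ← hττ]
    · -- Case B : m ≤ k, τ even, d odd
      have hmk' : m ≤ k := by omega
      have hτ2 : τ % 2 = 0 := by
        rw [hττ]
        exact Nat.even_iff.1 (heven (k+1) le_rfl (by omega))
      have hd2 : d % 2 = 1 := by
        obtain ⟨c, hc⟩ := seqD_dvd (t := t) hmk'
        have hm2 : t m % 2 = 1 := Nat.odd_iff.1 hmodd
        rcases Nat.even_or_odd d with hEv | hOd
        · exfalso
          have h0 : d % 2 = 0 := Nat.even_iff.1 hEv
          have h1 := Nat.mul_mod d c 2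
          rw [h0] at h1
          rw [← hdd] at hc
          omega
        · exact Nat.odd_iff.1 hOd
      have htm_eq : t m = d * t' m := ht_eq m hmk'
      have hm'odd : Odd (t' m) := by
        rw [Nat.odd_iff]
        have hm2 : t m % 2 = 1 := Nat.odd_iff.1 hmodd
        have h1 := Nat.mul_mod d (t' m) 2
        rw [hd2] at h1
        omega
      have hi'even : ∀ i ≤ k, i ≠ m → Even (t' i) := by
        intro i hik him
        rw [Nat.even_iff]
        have hi2 : t i % 2 = 0 := Nat.even_iff.1 (heven i (by omega) him)
        have hieq := ht_eq i hik
        have h1 := Nat.mul_mod d (t' i) 2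
        rw [hd2] at h1
        omega
      have hIH := ih t' m htel' hgcd' hmk' hm'odd hi'even B' hGap'
      have hx_par : ∀ x, (x*τ) % 2 = 0 := by
        intro x
        have h1 := Nat.mul_mod x τ 2
        rw [hτ2] at h1
        omega
      have hAx : ∀ x, ∑ n ∈ A x, eps n = (((x*τ/d) % 2 : ℕ) : ℤ) := by
        intro x
        rw [hsumA x]
        have hcg : ∀ a ∈ Finset.Icc 1 (x*τ/d), eps (x*τ - d*a) = eps a := by
          intro a ha
          rw [Finset.mem_Icc] at ha
          have hda : d*a ≤ x*τ := by
            rw [mul_comm]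
            exact (Nat.le_div_iff_mul_le hpos).1 ha.2
          apply eps_congr
          have h1 := hx_par x
          have h2 : (d*a) % 2 = a % 2 := by
            have := Nat.mul_mod d a 2
            rw [hd2] at this
            omega
          have h3 := Nat.sub_add_cancel hda
          have h4 := Nat.add_mod (x*τ - d*a) (d*a) 2
          omega
        rw [Finset.sum_congr rfl hcg, sum_eps_Icc]
      have hCx : ∀ x, ∑ n ∈ C x, eps n = ∑ q ∈ gapF S' B', eps q := by
        intro x
        rw [hsumC x]
        apply Finset.sum_congr rfl
        intro q hq
        apply eps_congr
        have h1 := hx_par x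
        have h2 : (d*q) % 2 = q % 2 := by
          have := Nat.mul_mod d q 2
          rw [hd2] at this
          omega
        have h4 := Nat.add_mod (x*τ) (d*q) 2
        omega
      set W' := ∑ q ∈ gapF S' B', eps q with hW'
      have hx_eval : ∀ x ∈ range d,
          ∑ n ∈ A x, eps n + ∑ n ∈ C x, eps n = (((x*τ/d) % 2 : ℕ) : ℤ) + W' := by
        intro x _
        rw [hAx x, hCx x]
      rw [Finset.sum_congr rfl hx_eval, Finset.sum_add_distrib, Finset.sum_const,
        Finset.card_range]
      have key1 : ∑ x ∈ range d, (((x*τ/d) % 2 : ℕ) : ℤ) = ((d/2 : ℕ) : ℤ) := by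
        have hcg : ∀ x ∈ range d, (((x*τ/d) % 2 : ℕ) : ℤ) = ((((x*τ) % d) % 2 : ℕ) : ℤ) := by
          intro x _
          have hdm := Nat.div_add_mod (x*τ) d
          have h1 := hx_par x
          have h2 : (d*(x*τ/d)) % 2 = (x*τ/d) % 2 := by
            have := Nat.mul_mod d (x*τ/d) 2
            rw [hd2] at this
            omega
          have h3 := Nat.add_mod (d*(x*τ/d)) ((x*τ)%d) 2
          have : (x*τ/d) % 2 = ((x*τ) % d) % 2 := by omega
          rw [this]
        rw [Finset.sum_congr rfl hcg]
        have hmm := sum_mul_mod (fun r => ((r % 2 : ℕ) : ℤ)) hcop hpos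
        rw [hmm, ← Nat.cast_sum, sum_mod_two]
      rw [key1]
      have hcast : (t m : ℤ) = (d:ℤ) * ((t' m : ℕ) : ℤ) := by
        rw [htm_eq]; push_cast; ring
      have h2d : (2:ℤ) * ((d/2 : ℕ) : ℤ) = (d:ℤ) - 1 := by omega
      calc 2 * (((d/2 : ℕ) : ℤ) + d • W')
          = 2 * ((d/2 : ℕ) : ℤ) + (d:ℤ) * (2 * W') := by
            rw [nsmul_eq_mul]; ring
        _ = ((d:ℤ) - 1) + (d:ℤ) * ((t' m : ℕ) - 1) := by rw [h2d, hIH]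
        _ = (d:ℤ) * ((t' m : ℕ) : ℤ) - 1 := by ring
        _ = (t m : ℤ) - 1 := by rw [← hcast]

/-- For `S` free generated by telescopic `T = (t_0, …, t_k)` with `gcd T = 1`, if exactly
one term `t_m` is odd (all terms `t_i` with `i ≠ m` are even), then
`O(G(S)) - E(G(S)) = (t_m - 1)/2`. -/
theorem parity_free_one_odd (t : ℕ → ℕ) (k : ℕ) (htel : IsTelescopic t k)
    (hgcd : seqD t k = 1)
    (m : ℕ) (hmk : m ≤ k) (hmodd : Odd (t m))
    (heven : ∀ i ≤ k, i ≠ m → Even (t i)) :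
    (countOdd (genBy t (k + 1))ᶜ : ℤ) - (countEven (genBy t (k + 1))ᶜ : ℤ)
      = ((t m : ℤ) - 1) / 2 := by
  classical
  obtain ⟨B, hBmem⟩ := genBy_bound k t htel hgcd
  have hB : ∀ n, n ∉ genBy t (k+1) → n < B := by
    intro n hn
    by_contra h
    exact hn (hBmem n (by omega))
  have hmain := main_sum k t m htel hgcd hmk hmodd heven B hB
  set S := genBy t (k+1) with hS
  have hOdd : {x ∈ Sᶜ | Odd x} = ↑((gapF S B).filter (fun n => n % 2 = 1)) := by
    ext n
    simp only [Set.mem_setOf_eq, Set.mem_compl_iff, Finset.coe_filter, Finset.mem_coe,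
      mem_gapF, Nat.odd_iff]
    constructor
    · rintro ⟨h1, h2⟩
      exact ⟨⟨hB n h1, h1⟩, h2⟩
    · rintro ⟨⟨_, h1⟩, h2⟩
      exact ⟨h1, h2⟩
  have hEven : {x ∈ Sᶜ | Even x} = ↑((gapF S B).filter (fun n => n % 2 = 0)) := by
    ext n
    simp only [Set.mem_setOf_eq, Set.mem_compl_iff, Finset.coe_filter, Finset.mem_coe,
      mem_gapF, Nat.even_iff]
    constructor
    · rintro ⟨h1, h2⟩
      exact ⟨⟨hB n h1, h1⟩, h2⟩
    · rintro ⟨⟨_, h1⟩, h2⟩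
      exact ⟨h1, h2⟩
  have hco : countOdd Sᶜ = ((gapF S B).filter (fun n => n % 2 = 1)).card := by
    rw [countOdd, hOdd, Set.ncard_coe_finset]
  have hce : countEven Sᶜ = ((gapF S B).filter (fun n => n % 2 = 0)).card := by
    rw [countEven, hEven, Set.ncard_coe_finset]
  have hsplit : ∑ n ∈ gapF S B, eps n
      = (((gapF S B).filter (fun n => n % 2 = 1)).card : ℤ)
        - (((gapF S B).filter (fun n => n % 2 = 0)).card : ℤ) := by
    rw [← Finset.sum_filter_add_sum_filter_not (gapF S B) (fun n => n % 2 = 1) eps]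
    have e1 : ∑ n ∈ (gapF S B).filter (fun n => n % 2 = 1), eps n
        = (((gapF S B).filter (fun n => n % 2 = 1)).card : ℤ) := by
      rw [Finset.sum_congr rfl (fun n hn => by
        have := (Finset.mem_filter.1 hn).2
        unfold eps
        simp [this] : ∀ n ∈ (gapF S B).filter (fun n => n % 2 = 1), eps n = 1)]
      simp
    have e2 : (gapF S B).filter (fun n => ¬ n % 2 = 1) = (gapF S B).filter (fun n => n % 2 = 0) := by
      apply Finset.filter_congr
      intro n _
      constructor
      · intro h; omega
      · intro h; omega
    have e3 : ∑ n ∈ (gapF S B).filter (fun n => n % 2 = 0), eps n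
        = -(((gapF S B).filter (fun n => n % 2 = 0)).card : ℤ) := by
      rw [Finset.sum_congr rfl (fun n hn => by
        have := (Finset.mem_filter.1 hn).2
        unfold eps
        simp [this] : ∀ n ∈ (gapF S B).filter (fun n => n % 2 = 0), eps n = -1)]
      simp
    rw [e1, e2, e3]
    ring
  rw [hco, hce]
  rw [hsplit] at hmain
  have ht2 : t m % 2 = 1 := Nat.odd_iff.1 hmodd
  omega
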